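/- Let (τ₁,…,τ_k) be a minimal transitive factorization of σ ∈ S_n into transpositions, and write τ₁ = (j₁ j₂). If j₁ and j₂ lie in different cycles of σ, then: j₁ and j₂ lie in the same cycle of σ' = τ₁σ = τ₂⋯τ_k; ℓ(σ') = ℓ(σ) − 1; and the subgroup generated by {τ₂,…,τ_k} acts transitively on {1,…,n}. -/
import Mathlib


open Equiv

/-- Number of disjoint cycles of a permutation of `Fin n`, counting each fixed
point as a cycle of length 1. -/
def cycleCount {n : ℕ} (σ : Perm (Fin n)) : ℕ :=
  σ.cycleType.card + (n - σ.support.card)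

/-- The subgroup generated by the entries of `L` acts transitively on `Fin n`. -/
def IsTransitiveFamily {n : ℕ} (L : List (Perm (Fin n))) : Prop :=
  ∀ x y : Fin n, ∃ g ∈ Subgroup.closure {τ | τ ∈ L}, g x = y

/-- `L` is a minimal transitive factorization of `σ` into transpositions. -/
def IsMinSwapFact {n : ℕ} (σ : Perm (Fin n)) (L : List (Perm (Fin n))) : Prop :=
  (∀ τ ∈ L, τ.IsSwap) ∧ L.prod = σ ∧ IsTransitiveFamily L ∧
  ∀ L' : List (Perm (Fin n)),
    (∀ τ ∈ L', τ.IsSwap) → L'.prod = σ → IsTransitiveFamily L' → L.length ≤ L'.length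

section Aux
set_option linter.unusedSectionVars false
set_option linter.unusedVariables false
open Equiv.Perm Finset

variable {α : Type*} [DecidableEq α] [Fintype α]

lemma sameCycle_iff_pow (σ : Perm α) (a b : α) : σ.SameCycle a b ↔ ∃ k : ℕ, (σ ^ k) a = b := by
  constructor
  · intro h
    obtain ⟨i, _, _, hi⟩ := h.exists_pow_eq σ
    exact ⟨i, hi⟩
  · rintro ⟨k, hk⟩
    exact ⟨(k : ℤ), by simpa using hk⟩

/-- points whose σ-orbit avoids x and y have the same orbit under swap x y * σ -/
lemma pow_swap_mul_eq (σ : Perm α) (x y a : α)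
    (hx : ¬ σ.SameCycle a x) (hy : ¬ σ.SameCycle a y) :
    ∀ k : ℕ, ((Equiv.swap x y * σ) ^ k) a = (σ ^ k) a := by
  intro k
  induction k with
  | zero => simp
  | succ k ih =>
    rw [pow_succ', pow_succ', Perm.mul_apply, Perm.mul_apply, ih, Perm.mul_apply]
    exact Equiv.swap_apply_of_ne_of_ne
      (fun h => hx ((sameCycle_iff_pow σ a x).2 ⟨k+1, by simpa [Perm.mul_apply, pow_succ'] using h⟩))
      (fun h => hy ((sameCycle_iff_pow σ a y).2 ⟨k+1, by simpa [Perm.mul_apply, pow_succ'] using h⟩))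

lemma pow_mod_period' (σ : Perm α) (x : α) (p k : ℕ) (hpx : (σ ^ p) x = x) :
    (σ ^ k) x = (σ ^ (k % p)) x := by
  conv_lhs => rw [← Nat.mod_add_div k p]
  rw [pow_add, Perm.mul_apply]
  congr 1
  induction (k / p) with
  | zero => simp
  | succ j ih =>
    rw [Nat.mul_succ, pow_add, Perm.mul_apply, hpx, ih]

lemma swap_mul_sameCycle_left (σ : Perm α) (x y : α) (h : ¬ σ.SameCycle x y) :
    (Equiv.swap x y * σ).SameCycle x y ∧
    ∀ a, σ.SameCycle x a → (Equiv.swap x y * σ).SameCycle x a := by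
  have hex : ∃ k : ℕ, 0 < k ∧ (σ ^ k) x = x :=
    ⟨orderOf σ, orderOf_pos σ, by rw [pow_orderOf_eq_one]; rfl⟩
  classical
  set p := Nat.find hex with hp
  obtain ⟨hp0, hpx⟩ := Nat.find_spec hex
  have hmin : ∀ k, k < p → 0 < k → (σ ^ k) x ≠ x := by
    intro k hk h0 he
    exact Nat.find_min hex hk ⟨h0, he⟩
  have key : ∀ k, k < p → ((Equiv.swap x y * σ) ^ k) x = (σ ^ k) x := by
    intro k
    induction k with
    | zero => simp
    | succ k ih =>
      intro hk
      rw [pow_succ', pow_succ', Perm.mul_apply, Perm.mul_apply, ih (Nat.lt_of_succ_lt hk),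
        Perm.mul_apply]
      refine Equiv.swap_apply_of_ne_of_ne ?_ ?_
      · have := hmin (k+1) hk (Nat.succ_pos k)
        simpa [pow_succ', Perm.mul_apply] using this
      · intro he
        exact h ((sameCycle_iff_pow σ x y).2 ⟨k+1, by simpa [pow_succ', Perm.mul_apply] using he⟩)
  have hfinal : ((Equiv.swap x y * σ) ^ p) x = y := by
    have hp1 : p - 1 < p := Nat.sub_lt hp0 one_pos
    have : ((Equiv.swap x y * σ) ^ p) x
        = (Equiv.swap x y * σ) (((Equiv.swap x y * σ) ^ (p-1)) x) := by
      rw [← Perm.mul_apply, ← pow_succ']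
      congr 2
      omega
    rw [this, key _ hp1, Perm.mul_apply, ← Perm.mul_apply σ, ← pow_succ']
    have : p - 1 + 1 = p := by omega
    rw [this, hpx, Equiv.swap_apply_left]
  refine ⟨⟨(p : ℤ), by simpa using hfinal⟩, ?_⟩
  intro a ha
  obtain ⟨k, hk⟩ := (sameCycle_iff_pow σ x a).1 ha
  refine (sameCycle_iff_pow _ x a).2 ⟨k % p, ?_⟩
  rw [key _ (Nat.mod_lt _ hp0), ← pow_mod_period' σ x p k hpx, hk]

lemma swap_mul_sameCycle_x_of_U (σ : Perm α) (x y : α) (h : ¬ σ.SameCycle x y) (a : α)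
    (ha : σ.SameCycle x a ∨ σ.SameCycle y a) : (Equiv.swap x y * σ).SameCycle x a := by
  rcases ha with ha | ha
  · exact (swap_mul_sameCycle_left σ x y h).2 a ha
  · have h' : ¬ σ.SameCycle y x := fun hc => h hc.symm
    have := (swap_mul_sameCycle_left σ y x h').2 a ha
    rw [Equiv.swap_comm] at this
    exact ((swap_mul_sameCycle_left σ x y h).1).trans this

lemma swap_mul_U_closed (σ : Perm α) (x y : α) (b : α)
    (hb : (Equiv.swap x y * σ).SameCycle x b) :
    σ.SameCycle x b ∨ σ.SameCycle y b := by
  obtain ⟨k, hk⟩ := (sameCycle_iff_pow _ x b).1 hb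
  subst hk
  clear hb
  induction k with
  | zero => exact Or.inl (SameCycle.refl σ x)
  | succ k ih =>
    rw [pow_succ', Perm.mul_apply, Perm.mul_apply]
    set z := ((Equiv.swap x y * σ) ^ k) x with hz
    have hσz : σ.SameCycle x (σ z) ∨ σ.SameCycle y (σ z) := by
      rcases ih with hh | hh
      · exact Or.inl (hh.trans ⟨1, by simp⟩)
      · exact Or.inr (hh.trans ⟨1, by simp⟩)
    by_cases h1 : σ z = x
    · rw [h1, Equiv.swap_apply_left]; exact Or.inr (SameCycle.refl σ y)
    by_cases h2 : σ z = y
    · rw [h2, Equiv.swap_apply_right]; exact Or.inl (SameCycle.refl σ x)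
    · rw [Equiv.swap_apply_of_ne_of_ne h1 h2]; exact hσz

lemma swap_mul_sameCycle_iff_U (σ : Perm α) (x y : α) (h : ¬ σ.SameCycle x y) (a b : α)
    (ha : σ.SameCycle x a ∨ σ.SameCycle y a) :
    (Equiv.swap x y * σ).SameCycle a b ↔ (σ.SameCycle x b ∨ σ.SameCycle y b) := by
  have hxa := swap_mul_sameCycle_x_of_U σ x y h a ha
  constructor
  · intro hab
    exact swap_mul_U_closed σ x y b (hxa.trans hab)
  · intro hb
    exact hxa.symm.trans (swap_mul_sameCycle_x_of_U σ x y h b hb)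

lemma swap_mul_sameCycle_iff_out (σ : Perm α) (x y : α) (a b : α)
    (hax : ¬ σ.SameCycle a x) (hay : ¬ σ.SameCycle a y) :
    (Equiv.swap x y * σ).SameCycle a b ↔ σ.SameCycle a b := by
  rw [sameCycle_iff_pow, sameCycle_iff_pow]
  constructor <;> rintro ⟨k, hk⟩ <;> refine ⟨k, ?_⟩
  · rw [← pow_swap_mul_eq σ x y a hax hay k]; exact hk
  · rw [pow_swap_mul_eq σ x y a hax hay k]; exact hk

/-- The `SameCycle` class of `a` as a finset. -/
noncomputable def cls (σ : Perm α) (a : α) : Finset α :=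
  univ.filter (fun b => σ.SameCycle a b)

lemma mem_cls {σ : Perm α} {a b : α} : b ∈ cls σ a ↔ σ.SameCycle a b := by
  simp [cls]

lemma cls_self (σ : Perm α) (a : α) : a ∈ cls σ a := mem_cls.2 (SameCycle.refl σ a)

lemma cls_eq_of_sameCycle {σ : Perm α} {a b : α} (h : σ.SameCycle a b) :
    cls σ a = cls σ b := by
  ext c
  simp only [mem_cls]
  exact ⟨fun hc => h.symm.trans hc, fun hc => h.trans hc⟩

lemma cls_fixed {σ : Perm α} {a : α} (ha : σ a = a) : cls σ a = {a} := by
  ext b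
  simp only [mem_cls, Finset.mem_singleton]
  constructor
  · intro hb
    obtain ⟨k, hk⟩ := (sameCycle_iff_pow σ a b).1 hb
    have hfix : ∀ m : ℕ, (σ ^ m) a = a := by
      intro m
      induction m with
      | zero => simp
      | succ m ih => rw [pow_succ, Perm.mul_apply, ha, ih]
    rw [← hk, hfix]
  · rintro rfl; exact SameCycle.refl σ _

lemma cls_of_mem_support {σ : Perm α} {a : α} (ha : a ∈ σ.support) :
    cls σ a = (σ.cycleOf a).support := by
  ext b
  rw [mem_cls, Perm.mem_support_cycleOf_iff]
  exact ⟨fun hb => ⟨hb, ha⟩, fun hb => hb.1⟩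

lemma classCount_eq (σ : Perm α) :
    (univ.image (cls σ)).card = σ.cycleType.card + (Fintype.card α - σ.support.card) := by
  have hsplit : (univ : Finset α) = σ.support ∪ σ.supportᶜ := by
    rw [Finset.union_compl]
  rw [hsplit, Finset.image_union]
  have hdisj : Disjoint (σ.support.image (cls σ)) (σ.supportᶜ.image (cls σ)) := by
    rw [Finset.disjoint_left]
    rintro s hs hs'
    obtain ⟨a, ha, rfl⟩ := Finset.mem_image.1 hs
    obtain ⟨b, hb, hba⟩ := Finset.mem_image.1 hs'
    have : σ.SameCycle b a := mem_cls.1 (hba ▸ cls_self σ a)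
    rw [Finset.mem_compl] at hb
    exact hb (this.mem_support_iff.2 ha)
  rw [Finset.card_union_of_disjoint hdisj]
  congr 1
  · -- support part: equals cycleType.card
    have himg : σ.support.image (cls σ) = σ.cycleFactorsFinset.image Perm.support := by
      ext s
      simp only [Finset.mem_image]
      constructor
      · rintro ⟨a, ha, rfl⟩
        exact ⟨σ.cycleOf a, Perm.cycleOf_mem_cycleFactorsFinset_iff.2 ha,
          (cls_of_mem_support ha).symm⟩
      · rintro ⟨c, hc, rfl⟩
        have hc1 : c.IsCycle := (Perm.mem_cycleFactorsFinset_iff.1 hc).1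
        obtain ⟨a, ha⟩ := hc1.nonempty_support
        have haσ : a ∈ σ.support := Perm.mem_cycleFactorsFinset_support_le hc ha
        refine ⟨a, haσ, ?_⟩
        rw [cls_of_mem_support haσ, ← Perm.cycle_is_cycleOf ha hc]
    rw [himg, Finset.card_image_of_injOn, Perm.cycleType]
    · simp
    · intro c₁ h₁ c₂ h₂ he
      have hc1 : c₁.IsCycle := (Perm.mem_cycleFactorsFinset_iff.1 h₁).1
      obtain ⟨a, ha⟩ := hc1.nonempty_support
      have ha2 : a ∈ c₂.support := he ▸ ha
      rw [Perm.cycle_is_cycleOf ha h₁, Perm.cycle_is_cycleOf ha2 h₂]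
  · -- fixed part
    have : ∀ b ∈ σ.supportᶜ, cls σ b = {b} := by
      intro b hb
      exact cls_fixed (Perm.notMem_support.1 (Finset.mem_compl.1 hb))
    rw [Finset.card_image_of_injOn, Finset.card_compl]
    intro b hb c hc he
    have := this b hb ▸ this c hc ▸ he
    simpa using this

lemma classCount_swap_mul (σ : Perm α) (x y : α) (h : ¬ σ.SameCycle x y) :
    (univ.image (cls (Equiv.swap x y * σ))).card + 1 = (univ.image (cls σ)).card := by
  set σ' := Equiv.swap x y * σ with hσ'
  set U : Finset α := cls σ x ∪ cls σ y with hU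
  have hmemU : ∀ a, a ∈ U ↔ (σ.SameCycle x a ∨ σ.SameCycle y a) := by
    intro a; simp [hU, mem_cls]
  have h1 : ∀ a ∈ U, cls σ' a = U := by
    intro a ha
    ext b
    rw [mem_cls, hmemU b, hσ', swap_mul_sameCycle_iff_U σ x y h a b ((hmemU a).1 ha)]
  have h2 : ∀ a, a ∉ U → cls σ' a = cls σ a := by
    intro a ha
    rw [hmemU] at ha
    push_neg at ha
    ext b
    rw [mem_cls, mem_cls, hσ',
      swap_mul_sameCycle_iff_out σ x y a b (fun hc => ha.1 hc.symm) (fun hc => ha.2 hc.symm)]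
  have hUuniv : (univ : Finset α) = U ∪ (univ \ U) := by
    rw [Finset.union_sdiff_of_subset (Finset.subset_univ U)]
  have himg' : univ.image (cls σ') = insert U ((univ \ U).image (cls σ)) := by
    have hsplit : univ.image (cls σ') = (U.image (cls σ')) ∪ ((univ \ U).image (cls σ')) := by
      conv_lhs => rw [hUuniv]
      rw [Finset.image_union]
    have e1 : U.image (cls σ') = {U} := by
      rw [Finset.image_congr (g := fun _ => U) (fun a ha => h1 a ha)]
      exact Finset.image_const ⟨x, (hmemU x).2 (Or.inl (SameCycle.refl σ x))⟩ U
    have e2 : (univ \ U).image (cls σ') = (univ \ U).image (cls σ) :=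
      Finset.image_congr (fun a ha => h2 a (Finset.mem_sdiff.1 ha).2)
    rw [hsplit, e1, e2, ← Finset.insert_eq]
  have hUnot : U ∉ (univ \ U).image (cls σ) := by
    intro hc
    obtain ⟨a, ha, hac⟩ := Finset.mem_image.1 hc
    have : a ∈ U := hac ▸ cls_self σ a
    exact (Finset.mem_sdiff.1 ha).2 this
  have himg : univ.image (cls σ)
      = insert (cls σ x) (insert (cls σ y) ((univ \ U).image (cls σ))) := by
    ext s
    simp only [Finset.mem_image, Finset.mem_insert]
    constructor
    · rintro ⟨a, -, rfl⟩
      by_cases haU : a ∈ U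
      · rcases (hmemU a).1 haU with hh | hh
        · exact Or.inl (cls_eq_of_sameCycle hh).symm
        · exact Or.inr (Or.inl (cls_eq_of_sameCycle hh).symm)
      · exact Or.inr (Or.inr ⟨a, Finset.mem_sdiff.2 ⟨Finset.mem_univ a, haU⟩, rfl⟩)
    · rintro (rfl | rfl | ⟨a, -, rfl⟩) <;> exact ⟨_, Finset.mem_univ _, rfl⟩
  have hynot : cls σ y ∉ (univ \ U).image (cls σ) := by
    intro hc
    obtain ⟨a, ha, hac⟩ := Finset.mem_image.1 hc
    have : σ.SameCycle a y := mem_cls.1 (hac ▸ cls_self σ y)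
    exact (Finset.mem_sdiff.1 ha).2 ((hmemU a).2 (Or.inr this.symm))
  have hxnot : cls σ x ∉ insert (cls σ y) ((univ \ U).image (cls σ)) := by
    intro hc
    rcases Finset.mem_insert.1 hc with hc | hc
    · have : y ∈ cls σ x := by rw [hc]; exact cls_self σ y
      exact h (mem_cls.1 this)
    · obtain ⟨a, ha, hac⟩ := Finset.mem_image.1 hc
      have : σ.SameCycle a x := mem_cls.1 (hac ▸ cls_self σ x)
      exact (Finset.mem_sdiff.1 ha).2 ((hmemU a).2 (Or.inl this.symm))
  rw [himg', himg, Finset.card_insert_of_notMem hUnot,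
    Finset.card_insert_of_notMem hxnot, Finset.card_insert_of_notMem hynot]

theorem join_case_of_min_swap_factorization'
    (n : ℕ) (σ : Perm (Fin n)) (L : List (Perm (Fin n))) (j₁ j₂ : Fin n) (hj : j₁ ≠ j₂)
    (hmin : (∀ τ ∈ (Equiv.swap j₁ j₂ :: L), τ.IsSwap) ∧ (Equiv.swap j₁ j₂ :: L).prod = σ ∧
      (∀ x y : Fin n, ∃ g ∈ Subgroup.closure {τ | τ ∈ (Equiv.swap j₁ j₂ :: L)}, g x = y))
    (hdiff : ¬ σ.SameCycle j₁ j₂) :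
    (Equiv.swap j₁ j₂ * σ).SameCycle j₁ j₂ ∧
    (Equiv.swap j₁ j₂ * σ).cycleType.card + (n - (Equiv.swap j₁ j₂ * σ).support.card)
      = σ.cycleType.card + (n - σ.support.card) - 1 ∧
    (∀ x y : Fin n, ∃ g ∈ Subgroup.closure {τ | τ ∈ L}, g x = y) := by
  set σ' := Equiv.swap j₁ j₂ * σ with hσ'
  have part1 : σ'.SameCycle j₁ j₂ := (swap_mul_sameCycle_left σ j₁ j₂ hdiff).1
  refine ⟨part1, ?_, ?_⟩
  · -- counting
    have h1 := classCount_eq σ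
    have h2 := classCount_eq σ'
    have h3 := classCount_swap_mul σ j₁ j₂ hdiff
    rw [← hσ'] at h3
    simp only [Fintype.card_fin] at h1 h2
    have hle : σ.support.card ≤ n := by
      simpa using Finset.card_le_card (Finset.subset_univ σ.support)
    have hle' : σ'.support.card ≤ n := by
      simpa using Finset.card_le_card (Finset.subset_univ σ'.support)
    omega
  · -- transitivity of L
    intro a b
    set S : Set (Perm (Fin n)) := {τ | τ ∈ L} with hS
    set H := Subgroup.closure S with hH
    have hprodmem : L.prod ∈ H := Subgroup.list_prod_mem _ (fun τ hτ => Subgroup.subset_closure hτ)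
    have hLprod : L.prod = σ' := by
      have := hmin.2.1
      rw [List.prod_cons] at this
      rw [hσ', ← this, ← mul_assoc, Equiv.swap_mul_self, one_mul]
    obtain ⟨k, hk⟩ := part1
    rw [← hLprod] at hk
    set O : Set (Fin n) := {c | ∃ g ∈ H, g a = c} with hO
    have hOmem : ∀ h ∈ H, ∀ c ∈ O, h c ∈ O := by
      rintro h hh c ⟨g, hg, rfl⟩
      exact ⟨h * g, mul_mem hh hg, rfl⟩
    have hswapO : ∀ c ∈ O, Equiv.swap j₁ j₂ c ∈ O := by
      rintro c ⟨g, hg, hga⟩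
      by_cases h1 : c = j₁
      · rw [h1, Equiv.swap_apply_left]
        refine ⟨L.prod ^ k * g, mul_mem (zpow_mem hprodmem k) hg, ?_⟩
        rw [Perm.mul_apply, hga, h1, hk]
      by_cases h2 : c = j₂
      · rw [h2, Equiv.swap_apply_right]
        refine ⟨L.prod ^ (-k) * g, mul_mem (zpow_mem hprodmem (-k)) hg, ?_⟩
        have hinv : (L.prod ^ (-k)) j₂ = j₁ := by
          rw [← hk, ← Perm.mul_apply, ← zpow_add, neg_add_cancel, zpow_zero, Perm.one_apply]
        rw [Perm.mul_apply, hga, h2, hinv]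
      · rw [Equiv.swap_apply_of_ne_of_ne h1 h2]; exact ⟨g, hg, hga⟩
    have hseteq : {τ | τ ∈ (Equiv.swap j₁ j₂ :: L)} = insert (Equiv.swap j₁ j₂) S := by
      ext τ; simp [hS, List.mem_cons, Set.mem_insert_iff]
    obtain ⟨g, hg, hgab⟩ := hmin.2.2 a b
    rw [hseteq] at hg
    have key : ∀ c ∈ O, g c ∈ O ∧ g⁻¹ c ∈ O := by
      refine Subgroup.closure_induction ?_ ?_ ?_ ?_ hg
      · intro τ hτ
        rcases Set.mem_insert_iff.1 hτ with rfl | hτS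
        · intro c hc
          refine ⟨hswapO c hc, ?_⟩
          rw [Equiv.swap_inv]
          exact hswapO c hc
        · intro c hc
          exact ⟨hOmem τ (Subgroup.subset_closure hτS) c hc,
            hOmem τ⁻¹ (inv_mem (Subgroup.subset_closure hτS)) c hc⟩
      · intro c hc; constructor <;> simpa using hc
      · intro u v _ _ hu hv c hc
        refine ⟨?_, ?_⟩
        · have := (hu (v c) (hv c hc).1).1
          simpa [Perm.mul_apply] using this
        · have := (hv (u⁻¹ c) (hu c hc).2).2
          simpa [Perm.mul_apply] using this
      · intro u _ hu c hc
        exact ⟨(hu c hc).2, by simpa using (hu c hc).1⟩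
    have haO : a ∈ O := ⟨1, one_mem H, rfl⟩
    obtain ⟨g', hg', hg'a⟩ := (key a haO).1
    exact ⟨g', hg', by rw [hg'a, hgab]⟩

end Aux

/-- If the first transposition `τ₁ = (j₁ j₂)` of a minimal transitive factorization of `σ`
into transpositions has `j₁, j₂` in different cycles of `σ`, then in `σ' = τ₁σ` the points
`j₁, j₂` lie in the same cycle, `ℓ(σ') = ℓ(σ) - 1`, and the subgroup generated by the
remaining transpositions still acts transitively on `{1,…,n}`. -/
theorem join_case_of_min_swap_factorization
    (n : ℕ) (σ : Perm (Fin n)) (L : List (Perm (Fin n))) (j₁ j₂ : Fin n) (hj : j₁ ≠ j₂)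
    (hmin : IsMinSwapFact σ (Equiv.swap j₁ j₂ :: L))
    (hdiff : ¬ σ.SameCycle j₁ j₂) :
    (Equiv.swap j₁ j₂ * σ).SameCycle j₁ j₂ ∧
    cycleCount (Equiv.swap j₁ j₂ * σ) = cycleCount σ - 1 ∧
    IsTransitiveFamily L := by
  obtain ⟨hswaps, hprod, htrans, -⟩ := hmin
  have h := join_case_of_min_swap_factorization' n σ L j₁ j₂ hj ⟨hswaps, hprod, htrans⟩ hdiff
  exact ⟨h.1, h.2.1, h.2.2⟩
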